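/- Let a randomized algorithm A be β_n-uniformly stable with respect to a loss ℓ bounded in [0, B]. Then with probability at least 1 − δ over the draw of an i.i.d. sample D of size n, the expected generalization gap satisfies E_A[R(A_D) − R_n(A_D)] ≤ 2β_n + (4nβ_n + B)·√(log(1/δ)/(2n)). -/

import Mathlib

open MeasureTheory Real ProbabilityTheory

set_option linter.unusedSectionVars false
set_option maxHeartbeats 1000000



lemma key_ineq (p : ℝ) (hp0 : 0 ≤ p) (hp1 : p ≤ 1) (h : ℝ) :
    -p*h + Real.log (1 - p + p * Real.exp h) ≤ h^2/8 := by
  rcases eq_or_lt_of_le hp0 with h0 | h0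
  · simp [← h0]; positivity
  rcases eq_or_lt_of_le hp1 with h1 | h1
  · subst h1; simp [Real.log_exp]; positivity
  -- now 0 < p < 1
  set q : ℝ → ℝ := fun x => 1 - p + p * Real.exp x with hq
  have hqpos : ∀ x, 0 < q x := fun x => by
    have := Real.exp_pos x; simp only [hq]; nlinarith
  set L : ℝ → ℝ := fun x => -p*x + Real.log (q x) with hL
  set L' : ℝ → ℝ := fun x => -p + p * Real.exp x / q x with hL'
  have hderivL : ∀ x, HasDerivAt L (L' x) x := by
    intro x
    have h1 : HasDerivAt q (p * Real.exp x) x := by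
      exact ((Real.hasDerivAt_exp x).const_mul p).const_add (1 - p)
    have h2 : HasDerivAt (fun x => Real.log (q x)) (p * Real.exp x / q x) x :=
      h1.log (hqpos x).ne'
    exact (((hasDerivAt_id x).const_mul (-p)).add h2).congr_deriv (by simp [hL'])
  have hderivL' : ∀ x, HasDerivAt L' (p * (1-p) * Real.exp x / (q x)^2) x := by
    intro x
    have h1 : HasDerivAt q (p * Real.exp x) x := by
      exact ((Real.hasDerivAt_exp x).const_mul p).const_add (1 - p)
    have h2 : HasDerivAt (fun x => p * Real.exp x) (p * Real.exp x) x :=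
      (Real.hasDerivAt_exp x).const_mul p
    have h3 := h2.div h1 (hqpos x).ne'
    have he : (p * Real.exp x * q x - p * Real.exp x * (p * Real.exp x)) / (q x)^2
        = p * (1-p) * Real.exp x / (q x)^2 := by
      have : q x = 1 - p + p * Real.exp x := rfl
      field_simp [this]
      ring
    rw [he] at h3
    simpa [hL'] using h3.const_add (-p)
  set D : ℝ → ℝ := fun x => x^2/8 - L x with hD
  set D' : ℝ → ℝ := fun x => x/4 - L' x with hD'
  have hderivD : ∀ x, HasDerivAt D (D' x) x := by
    intro x
    have h1 : HasDerivAt (fun x : ℝ => x^2/8) (x/4) x := by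
      have := (hasDerivAt_pow 2 x).div_const 8
      simpa [hD] using this.congr_deriv (by ring)
    exact h1.sub (hderivL x)
  have hderivD' : ∀ x, HasDerivAt D' (1/4 - p * (1-p) * Real.exp x / (q x)^2) x := by
    intro x
    have h1 : HasDerivAt (fun x : ℝ => x/4) (1/4) x := (hasDerivAt_id x).div_const 4
    exact h1.sub (hderivL' x)
  have hD''nonneg : ∀ x, 0 ≤ 1/4 - p * (1-p) * Real.exp x / (q x)^2 := by
    intro x
    have hqx := hqpos x
    have hex := Real.exp_pos x
    rw [sub_nonneg, div_le_iff₀ (by positivity)]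
    have : q x = 1 - p + p * Real.exp x := rfl
    nlinarith [sq_nonneg ((1-p) - p * Real.exp x)]
  have hD'mono : Monotone D' := by
    apply monotone_of_deriv_nonneg
    · exact fun x => (hderivD' x).differentiableAt
    · intro x; rw [(hderivD' x).deriv]; exact hD''nonneg x
  have hD'0 : D' 0 = 0 := by
    simp [hD', hL', hq]
  have hDcont : Continuous D := by
    have : Differentiable ℝ D := fun x => (hderivD x).differentiableAt
    exact this.continuous
  have hD0 : D 0 = 0 := by simp [hD, hL, hq]
  have key : 0 ≤ D h := by
    rcases le_or_gt 0 h with hh | hh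
    · have := monotoneOn_of_deriv_nonneg (convex_Ici 0) (hDcont.continuousOn)
        (fun x _ => (hderivD x).differentiableAt.differentiableWithinAt)
        (fun x hx => by
          rw [(hderivD x).deriv]
          have : (0:ℝ) ≤ x := le_of_lt (by simpa using hx)
          calc (0:ℝ) = D' 0 := hD'0.symm
            _ ≤ D' x := hD'mono this)
        (Set.self_mem_Ici) (Set.mem_Ici.2 hh) hh
      rwa [hD0] at this
    · have := antitoneOn_of_deriv_nonpos (convex_Iic 0) (hDcont.continuousOn)
        (fun x _ => (hderivD x).differentiableAt.differentiableWithinAt)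
        (fun x hx => by
          rw [(hderivD x).deriv]
          have hx0 : x ≤ (0:ℝ) := le_of_lt (by simpa using hx)
          calc D' x ≤ D' 0 := hD'mono hx0
            _ = 0 := hD'0)
        (Set.mem_Iic.2 hh.le) (Set.self_mem_Iic) hh.le
      rwa [hD0] at this
  have : L h ≤ h^2/8 := by simpa [hD, sub_nonneg] using key
  simpa [hL] using this



lemma hoeffding_lemma {Ω : Type*} [MeasurableSpace Ω] (ν : Measure Ω) [IsProbabilityMeasure ν]
    (X : Ω → ℝ) (hX : Measurable X) (a b t : ℝ) (hab : ∀ ω, X ω ∈ Set.Icc a b)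
    (hmean : ∫ ω, X ω ∂ν = 0) :
    ∫ ω, Real.exp (t * X ω) ∂ν ≤ Real.exp (t^2*(b-a)^2/8) := by
  have hne : Nonempty Ω := by
    by_contra hempty
    have : IsEmpty Ω := not_nonempty_iff.1 hempty
    have h1 : ν Set.univ = 1 := measure_univ
    rw [Set.univ_eq_empty_iff.2 this] at h1
    simp at h1
  obtain ⟨ω₀⟩ := hne
  have haleb : a ≤ b := le_trans (hab ω₀).1 (hab ω₀).2
  have hXint : Integrable X ν := by
    refine Integrable.mono' (integrable_const (|a| + |b|)) hX.aestronglyMeasurable ?_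
    filter_upwards with ω
    have h1 := (hab ω).1; have h2 := (hab ω).2
    rw [Real.norm_eq_abs, abs_le]
    constructor
    · nlinarith [neg_abs_le a, abs_nonneg b]
    · nlinarith [le_abs_self b, abs_nonneg a]
  have ha0 : a ≤ 0 := by
    have : ∫ _ : Ω, a ∂ν ≤ ∫ ω, X ω ∂ν :=
      integral_mono (integrable_const a) hXint (fun ω => (hab ω).1)
    simpa [hmean] using this
  have hb0 : 0 ≤ b := by
    have : ∫ ω, X ω ∂ν ≤ ∫ _ : Ω, b ∂ν :=
      integral_mono hXint (integrable_const b) (fun ω => (hab ω).2)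
    simpa [hmean] using this
  rcases eq_or_lt_of_le haleb with heq | hlt
  · have ha : a = 0 := le_antisymm ha0 (heq ▸ hb0)
    have hXeq : ∀ ω, X ω = 0 := fun ω => le_antisymm (ha ▸ heq ▸ (hab ω).2) (ha ▸ (hab ω).1)
    simp only [hXeq, mul_zero, Real.exp_zero, integral_const, measure_univ, probReal_univ, ENNReal.toReal_one,
      smul_eq_mul, one_mul]
    exact Real.one_le_exp (by positivity)
  have hba : 0 < b - a := sub_pos.2 hlt
  set p : ℝ := -a / (b - a) with hp
  have hp0 : 0 ≤ p := div_nonneg (by linarith) hba.le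
  have hp1 : p ≤ 1 := (div_le_one hba).2 (by linarith)
  set h : ℝ := t * (b - a) with hh
  -- pointwise convexity bound
  have hpt : ∀ ω, Real.exp (t * X ω) * (b - a) ≤ (b - X ω) * Real.exp (t*a) + (X ω - a) * Real.exp (t*b) := by
    intro ω
    set x := X ω with hx
    have h1 : a ≤ x := (hab ω).1
    have h2 : x ≤ b := (hab ω).2
    have hne0 : b - a ≠ 0 := sub_ne_zero.2 hlt.ne'
    have hu : (0:ℝ) ≤ (b - x)/(b-a) := div_nonneg (by linarith) hba.le
    have hv : (0:ℝ) ≤ (x - a)/(b-a) := div_nonneg (by linarith) hba.le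
    have huv : (b - x)/(b-a) + (x - a)/(b-a) = 1 := by field_simp; ring
    have hconv := convexOn_exp.2 (Set.mem_univ (t*a)) (Set.mem_univ (t*b)) hu hv huv
    simp only [smul_eq_mul] at hconv
    have harg : (b - x)/(b-a) * (t*a) + (x - a)/(b-a) * (t*b) = t * x := by
      field_simp; ring
    rw [harg] at hconv
    rw [← sub_nonneg]
    have hcalc : (b - x) * Real.exp (t*a) + (x - a) * Real.exp (t*b) - Real.exp (t*x) * (b-a)
        = (b-a) * (((b - x)/(b-a)) * Real.exp (t*a) + ((x - a)/(b-a)) * Real.exp (t*b) - Real.exp (t*x)) := by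
      field_simp
    rw [hcalc]
    exact mul_nonneg hba.le (by linarith [hconv])
  -- integrate
  have hexpint : Integrable (fun ω => Real.exp (t * X ω)) ν := by
    refine Integrable.mono' (integrable_const (Real.exp (|t| * (|a| + |b|)))) ?_ ?_
    · exact (hX.const_mul t).exp.aestronglyMeasurable
    filter_upwards with ω
    rw [Real.norm_eq_abs, abs_of_pos (Real.exp_pos _)]
    apply Real.exp_le_exp.2
    have h1 := (hab ω).1; have h2 := (hab ω).2
    have : |X ω| ≤ |a| + |b| := by
      rw [abs_le]; constructor
      · nlinarith [neg_abs_le a, abs_nonneg b]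
      · nlinarith [le_abs_self b, abs_nonneg a]
    calc t * X ω ≤ |t * X ω| := le_abs_self _
      _ = |t| * |X ω| := abs_mul _ _
      _ ≤ |t| * (|a| + |b|) := by
          exact mul_le_mul_of_nonneg_left this (abs_nonneg t)
  have hint2 : Integrable (fun ω => (b - X ω) * Real.exp (t*a) + (X ω - a) * Real.exp (t*b)) ν :=
    (((integrable_const b).sub hXint).mul_const _).add ((hXint.sub (integrable_const a)).mul_const _)
  have e1 : Integrable (fun ω => (b - X ω) * Real.exp (t*a)) ν :=
    ((integrable_const b).sub hXint).mul_const _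
  have e2 : Integrable (fun ω => (X ω - a) * Real.exp (t*b)) ν :=
    (hXint.sub (integrable_const a)).mul_const _
  have i1 : ∫ ω, b - X ω ∂ν = b := by
    rw [integral_sub (integrable_const b) hXint, hmean]; simp
  have i2 : ∫ ω, X ω - a ∂ν = -a := by
    rw [integral_sub hXint (integrable_const a), hmean]; simp
  have hmono : (∫ ω, Real.exp (t * X ω) ∂ν) * (b - a)
      ≤ b * Real.exp (t*a) - a * Real.exp (t*b) := by
    have hI := integral_mono (hexpint.mul_const (b - a)) hint2 hpt
    rw [integral_mul_const] at hI
    calc (∫ ω, Real.exp (t * X ω) ∂ν) * (b - a)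
        ≤ ∫ ω, (b - X ω) * Real.exp (t*a) + (X ω - a) * Real.exp (t*b) ∂ν := hI
      _ = b * Real.exp (t*a) - a * Real.exp (t*b) := by
          rw [integral_add e1 e2, integral_mul_const, integral_mul_const, i1, i2]
          ring
  have hintle : ∫ ω, Real.exp (t * X ω) ∂ν ≤ (b * Real.exp (t*a) - a * Real.exp (t*b)) / (b - a) :=
    (le_div_iff₀ hba).2 hmono
  -- identify with exp(L(h))
  have hQpos : 0 < 1 - p + p * Real.exp h := by
    rcases eq_or_lt_of_le hp0 with h0 | h0
    · rw [← h0]; norm_num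
    · have := Real.exp_pos h; nlinarith
  have hta : t * a = -p * h := by rw [hh, hp]; field_simp
  have htb : t * b = -p * h + h := by rw [hh, hp]; field_simp; ring
  have hident : (b * Real.exp (t*a) - a * Real.exp (t*b)) / (b - a)
      = Real.exp (-p*h) * (1 - p + p * Real.exp h) := by
    rw [hta, htb, Real.exp_add, hp]
    have hne0 : b - a ≠ 0 := sub_ne_zero.2 hlt.ne'
    field_simp
    ring
  calc ∫ ω, Real.exp (t * X ω) ∂ν
      ≤ (b * Real.exp (t*a) - a * Real.exp (t*b)) / (b - a) := hintle
    _ = Real.exp (-p*h) * (1 - p + p * Real.exp h) := hident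
    _ = Real.exp (-p*h + Real.log (1 - p + p * Real.exp h)) := by
        rw [Real.exp_add, Real.exp_log hQpos]
    _ ≤ Real.exp (h^2/8) := Real.exp_le_exp.2 (key_ineq p hp0 hp1 h)
    _ = Real.exp (t^2*(b-a)^2/8) := by rw [hh]; ring_nf



/-- Insert a coordinate into a tuple (non-dependent version of `Fin.insertNth`). -/
def insZ {Z : Type*} {n : ℕ} (i : Fin (n+1)) (x : Z) (E : Fin n → Z) : Fin (n+1) → Z :=
  Fin.insertNth (α := fun _ : Fin (n+1) => Z) i x E

lemma insZ_same {Z : Type*} {n : ℕ} (i : Fin (n+1)) (x : Z) (E : Fin n → Z) :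
    insZ i x E i = x := by simp [insZ]

lemma insZ_succAbove {Z : Type*} {n : ℕ} (i : Fin (n+1)) (x : Z) (E : Fin n → Z) (j : Fin n) :
    insZ i x E (i.succAbove j) = E j := by simp [insZ]

section helpers

variable {Z : Type*} [MeasurableSpace Z] (μ : Measure Z) [IsProbabilityMeasure μ]

lemma int_of_bdd {α : Type*} [MeasurableSpace α] (ν : Measure α) [IsFiniteMeasure ν]
    {f : α → ℝ} (hf : AEStronglyMeasurable f ν) {M : ℝ} (h : ∀ x, |f x| ≤ M) :
    Integrable f ν :=
  Integrable.mono' (integrable_const M) hf (Filter.Eventually.of_forall fun x => by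
    rw [Real.norm_eq_abs]; exact h x)

lemma abs_int_le {α : Type*} [MeasurableSpace α] (ν : Measure α) [IsProbabilityMeasure ν]
    (f : α → ℝ) (M : ℝ) (hf : AEStronglyMeasurable f ν) (h : ∀ x, |f x| ≤ M) :
    |∫ x, f x ∂ν| ≤ M := by
  have hint : Integrable f ν := int_of_bdd ν hf h
  calc |∫ x, f x ∂ν| ≤ ∫ x, |f x| ∂ν := by
        simpa [Real.norm_eq_abs] using norm_integral_le_integral_norm f (μ := ν)
    _ ≤ ∫ _ : α, M ∂ν := integral_mono hint.abs (integrable_const M) (fun x => h x)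
    _ = M := by simp

lemma measurable_insZ {n : ℕ} (i : Fin (n+1)) :
    Measurable (fun p : Z × (Fin n → Z) => insZ i p.1 p.2) := by
  apply measurable_pi_lambda
  intro j
  rcases eq_or_ne j i with rfl | hji
  · simp only [insZ_same]
    exact measurable_fst
  · obtain ⟨j', rfl⟩ := Fin.exists_succAbove_eq hji
    simp only [insZ_succAbove]
    exact (measurable_pi_apply j').comp measurable_snd

lemma insZ_diff_succAbove {n : ℕ} (i : Fin (n+1)) (k : Fin n) (x : Z) (E E' : Fin n → Z)
    (hEE' : ∀ j, j ≠ k → E j = E' j) :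
    ∀ j, j ≠ i.succAbove k → insZ i x E j = insZ i x E' j := by
  intro j hj
  rcases eq_or_ne j i with rfl | hji
  · rw [insZ_same, insZ_same]
  · obtain ⟨j', rfl⟩ := Fin.exists_succAbove_eq hji
    rw [insZ_succAbove, insZ_succAbove]
    exact hEE' j' (fun hc => hj (by rw [hc]))

lemma insZ_diff_same {n : ℕ} (i : Fin (n+1)) (x x' : Z) (E : Fin n → Z) :
    ∀ j, j ≠ i → insZ i x E j = insZ i x' E j := by
  intro j hj
  obtain ⟨j', rfl⟩ := Fin.exists_succAbove_eq hj
  rw [insZ_succAbove, insZ_succAbove]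

lemma integral_insZ {n : ℕ} (i : Fin (n+1)) (F : (Fin (n+1) → Z) → ℝ)
    (hF : Measurable F) (M : ℝ) (hM : ∀ D, |F D| ≤ M) :
    ∫ D, F D ∂(Measure.pi fun _ : Fin (n+1) => μ)
      = ∫ E, ∫ x, F (insZ i x E) ∂μ ∂(Measure.pi fun _ : Fin n => μ) := by
  have MP := measurePreserving_piFinSuccAbove (fun _ : Fin (n+1) => μ) i
  have MPs := MeasurePreserving.symm (MeasurableEquiv.piFinSuccAbove (fun _ : Fin (n+1) => Z) i) MP
  have hGmeas : Measurable (fun p : Z × (Fin n → Z) => F (insZ i p.1 p.2)) :=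
    hF.comp (measurable_insZ i)
  have hGint : Integrable (fun p : Z × (Fin n → Z) => F (insZ i p.1 p.2))
      (μ.prod (Measure.pi fun _ : Fin n => μ)) :=
    int_of_bdd _ hGmeas.aestronglyMeasurable (fun p => hM _)
  have hsymm : ∀ p : Z × (Fin n → Z),
      (MeasurableEquiv.piFinSuccAbove (fun _ : Fin (n+1) => Z) i).symm p = insZ i p.1 p.2 :=
    fun p => rfl
  have h1 : ∫ D, F D ∂(Measure.pi fun _ : Fin (n+1) => μ)
      = ∫ p : Z × (Fin n → Z), F (insZ i p.1 p.2)
          ∂(μ.prod (Measure.pi fun _ : Fin n => μ)) := by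
    rw [← MeasurePreserving.integral_comp' MPs F]
    exact integral_congr_ae (Filter.Eventually.of_forall fun p => congrArg F (hsymm p))
  rw [h1, integral_prod _ hGint]
  exact integral_integral_swap hGint

end helpers

lemma mgf_bound {Z : Type*} [MeasurableSpace Z] (μ : Measure Z) [IsProbabilityMeasure μ]
    (c t : ℝ) :
    ∀ (n : ℕ) (f : (Fin n → Z) → ℝ) (M : ℝ), Measurable f → (∀ D, |f D| ≤ M) →
    (∀ (k : Fin n) (D D' : Fin n → Z), (∀ j, j ≠ k → D j = D' j) → f D - f D' ≤ c) →
    ∫ D, Real.exp (t * (f D - ∫ D', f D' ∂(Measure.pi fun _ : Fin n => μ)))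
        ∂(Measure.pi fun _ : Fin n => μ)
      ≤ Real.exp (t^2 * n * c^2 / 8) := by
  intro n
  induction n with
  | zero =>
    intro f M hf hM hdiff
    have hconst : ∀ D : Fin 0 → Z, f D = f default := fun D => by
      congr 1; exact Subsingleton.elim _ _
    have hm : ∫ D', f D' ∂(Measure.pi fun _ : Fin 0 => μ) = f default := by
      rw [show f = fun _ => f default from funext hconst, integral_const]; simp
    have : (fun D : Fin 0 → Z => Real.exp (t * (f D - ∫ D', f D' ∂(Measure.pi fun _ : Fin 0 => μ))))
        = fun _ => 1 := by
      funext D; rw [hm, hconst D]; simp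
    rw [this, integral_const]
    simp only [measure_univ, probReal_univ, ENNReal.toReal_one, smul_eq_mul, one_mul]
    exact Real.one_le_exp (by positivity)
  | succ n IH =>
    intro f M hf hM hdiff
    set Pn := Measure.pi fun _ : Fin n => μ with hPn
    set Pm := Measure.pi fun _ : Fin (n+1) => μ with hPm
    set m := ∫ D, f D ∂Pm with hm
    have hmabs : |m| ≤ M := abs_int_le Pm f M hf.aestronglyMeasurable hM
    set i0 : Fin (n+1) := 0 with hi0
    set g : (Fin n → Z) → ℝ := fun E => ∫ x, f (insZ i0 x E) ∂μ with hg
    have hGmeas : Measurable (fun p : Z × (Fin n → Z) => f (insZ i0 p.1 p.2)) :=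
      hf.comp (measurable_insZ i0)
    have hgmeas : Measurable g := by
      have := (hGmeas.stronglyMeasurable).integral_prod_left' (μ := μ)
      exact this.measurable
    have hgbdd : ∀ E, |g E| ≤ M :=
      fun E => abs_int_le μ _ M (hGmeas.comp (measurable_id.prodMk measurable_const)
          |>.aestronglyMeasurable) (fun x => hM _)
    have hfEmeas : ∀ E : Fin n → Z, Measurable (fun x => f (insZ i0 x E)) :=
      fun E => hGmeas.comp (measurable_id.prodMk measurable_const)
    have hfEint : ∀ E : Fin n → Z, Integrable (fun x => f (insZ i0 x E)) μ :=
      fun E => int_of_bdd μ (hfEmeas E).aestronglyMeasurable (fun x => hM _)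
    -- g has bounded differences
    have hgdiff : ∀ (k : Fin n) (E E' : Fin n → Z), (∀ j, j ≠ k → E j = E' j) → g E - g E' ≤ c := by
      intro k E E' hEE'
      rw [hg, ← integral_sub (hfEint E) (hfEint E')]
      calc ∫ x, f (insZ i0 x E) - f (insZ i0 x E') ∂μ
          ≤ ∫ _ : Z, c ∂μ := by
            refine integral_mono ((hfEint E).sub (hfEint E')) (integrable_const c) (fun x => ?_)
            exact hdiff (i0.succAbove k) _ _ (insZ_diff_succAbove i0 k x E E' hEE')
        _ = c := by simp
    -- m = ∫ g
    have hmg : m = ∫ E, g E ∂Pn := integral_insZ μ i0 f hf M hM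
    -- pointwise Hoeffding bound on the inner integral
    have hZne : Nonempty Z := by
      by_contra hempty
      have : IsEmpty Z := not_nonempty_iff.1 hempty
      have h1 : μ Set.univ = 1 := measure_univ
      rw [Set.univ_eq_empty_iff.2 this] at h1
      simp at h1
    obtain ⟨z0⟩ := hZne
    have hc0 : 0 ≤ c := by
      have := hdiff 0 (fun _ => z0) (fun _ => z0) (fun _ _ => rfl)
      linarith
    have hinner : ∀ E : Fin n → Z,
        ∫ x, Real.exp (t * (f (insZ i0 x E) - m)) ∂μ
          ≤ Real.exp (t * (g E - m)) * Real.exp (t^2 * c^2 / 8) := by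
      intro E
      have hZne : Nonempty Z := ⟨z0⟩
      set fE : Z → ℝ := fun x => f (insZ i0 x E) with hfE
      have hrange : Set.range fE ≠ ∅ := Set.range_nonempty fE |>.ne_empty
      have hbdd : BddBelow (Set.range fE) := by
        refine ⟨-M, fun y hy => ?_⟩
        obtain ⟨x, rfl⟩ := hy
        have := hM (insZ i0 x E)
        exact neg_le_of_abs_le this
      set s : ℝ := sInf (Set.range fE) with hs
      set X : Z → ℝ := fun x => fE x - g E with hX
      have hXmem : ∀ x, X x ∈ Set.Icc (s - g E) (s + c - g E) := by
        intro x
        constructor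
        · have : s ≤ fE x := csInf_le hbdd ⟨x, rfl⟩
          simp only [hX]; linarith
        · have hle : fE x - c ≤ s := by
            refine le_csInf (Set.range_nonempty fE) (fun y hy => ?_)
            obtain ⟨x', rfl⟩ := hy
            have := hdiff i0 (insZ i0 x E) (insZ i0 x' E) (insZ_diff_same i0 x x' E)
            simp only [hfE]; linarith
          simp only [hX]; linarith
      have hXmeas : Measurable X := (hfEmeas E).sub measurable_const
      have hXmean : ∫ x, X x ∂μ = 0 := by
        rw [hX]
        simp only
        rw [integral_sub (hfEint E) (integrable_const _), integral_const]
        simp [hg]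
      have hhoeff := hoeffding_lemma μ X hXmeas (s - g E) (s + c - g E) t hXmem hXmean
      have hsplit : ∀ x, Real.exp (t * (fE x - m))
          = Real.exp (t * (g E - m)) * Real.exp (t * X x) := by
        intro x
        rw [← Real.exp_add]
        congr 1
        simp only [hX]
        ring
      calc ∫ x, Real.exp (t * (fE x - m)) ∂μ
          = ∫ x, Real.exp (t * (g E - m)) * Real.exp (t * X x) ∂μ := by
            exact integral_congr_ae (Filter.Eventually.of_forall fun x => hsplit x)
        _ = Real.exp (t * (g E - m)) * ∫ x, Real.exp (t * X x) ∂μ := integral_const_mul _ _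
        _ ≤ Real.exp (t * (g E - m)) * Real.exp (t^2 * (s + c - g E - (s - g E))^2 / 8) := by
            apply mul_le_mul_of_nonneg_left hhoeff (Real.exp_pos _).le
        _ = Real.exp (t * (g E - m)) * Real.exp (t^2 * c^2 / 8) := by
            congr 2
            ring
    -- main chain
    have hFmeas : Measurable (fun D => Real.exp (t * (f D - m))) :=
      ((hf.sub measurable_const).const_mul t).exp
    have hFbdd : ∀ D, |Real.exp (t * (f D - m))| ≤ Real.exp (|t| * (2*M)) := by
      intro D
      rw [abs_of_pos (Real.exp_pos _)]
      apply Real.exp_le_exp.2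
      calc t * (f D - m) ≤ |t * (f D - m)| := le_abs_self _
        _ = |t| * |f D - m| := abs_mul _ _
        _ ≤ |t| * (2*M) := by
            apply mul_le_mul_of_nonneg_left _ (abs_nonneg t)
            have h1 := hM D
            have h2 := hmabs
            calc |f D - m| ≤ |f D| + |m| := abs_sub _ _
              _ ≤ 2*M := by linarith
    have hstep1 : ∫ D, Real.exp (t * (f D - m)) ∂Pm
        = ∫ E, ∫ x, Real.exp (t * (f (insZ i0 x E) - m)) ∂μ ∂Pn :=
      integral_insZ μ i0 _ hFmeas _ hFbdd
    have houtmeas : StronglyMeasurable (fun E => ∫ x, Real.exp (t * (f (insZ i0 x E) - m)) ∂μ) :=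
      (((hGmeas.sub measurable_const).const_mul t).exp.stronglyMeasurable).integral_prod_left'
    have houtbdd : ∀ E, |∫ x, Real.exp (t * (f (insZ i0 x E) - m)) ∂μ| ≤ Real.exp (|t| * (2*M)) :=
      fun E => abs_int_le μ _ _ ((((hfEmeas E).sub measurable_const).const_mul t).exp.aestronglyMeasurable)
        (fun x => hFbdd _)
    have houtint : Integrable (fun E => ∫ x, Real.exp (t * (f (insZ i0 x E) - m)) ∂μ) Pn :=
      int_of_bdd Pn houtmeas.aestronglyMeasurable houtbdd
    have hKint : Integrable (fun E => Real.exp (t * (g E - m)) * Real.exp (t^2*c^2/8)) Pn := by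
      refine int_of_bdd Pn ?_ (M := Real.exp (|t| * (2*M)) * Real.exp (t^2*c^2/8)) ?_
      · exact ((((hgmeas.sub measurable_const).const_mul t).exp.mul measurable_const)).aestronglyMeasurable
      · intro E
        rw [abs_mul, abs_of_pos (Real.exp_pos _), abs_of_pos (Real.exp_pos _)]
        apply mul_le_mul_of_nonneg_right _ (Real.exp_pos _).le
        apply Real.exp_le_exp.2
        calc t * (g E - m) ≤ |t * (g E - m)| := le_abs_self _
          _ = |t| * |g E - m| := abs_mul _ _
          _ ≤ |t| * (2*M) := by
              apply mul_le_mul_of_nonneg_left _ (abs_nonneg t)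
              calc |g E - m| ≤ |g E| + |m| := abs_sub _ _
                _ ≤ 2*M := by linarith [hgbdd E, hmabs]
    calc ∫ D, Real.exp (t * (f D - m)) ∂Pm
        = ∫ E, ∫ x, Real.exp (t * (f (insZ i0 x E) - m)) ∂μ ∂Pn := hstep1
      _ ≤ ∫ E, Real.exp (t * (g E - m)) * Real.exp (t^2*c^2/8) ∂Pn :=
          integral_mono houtint hKint hinner
      _ = Real.exp (t^2*c^2/8) * ∫ E, Real.exp (t * (g E - m)) ∂Pn := by
          rw [integral_mul_const]
          exact mul_comm _ _
      _ ≤ Real.exp (t^2*c^2/8) * Real.exp (t^2 * n * c^2 / 8) := by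
          apply mul_le_mul_of_nonneg_left _ (Real.exp_pos _).le
          have := IH g M hgmeas hgbdd hgdiff
          rwa [← hmg] at this
      _ = Real.exp (t^2 * ((n:ℝ)+1) * c^2 / 8) := by
          rw [← Real.exp_add]
          congr 1
          ring
      _ = Real.exp (t^2 * ((n+1 : ℕ):ℝ) * c^2 / 8) := by
          congr 2
          push_cast
          ring


/-- Stability implies generalization: if a randomized algorithm is `β_n`-uniformly stable
with loss bounded in `[0, B]`, then with probability at least `1 − δ` over the i.i.d.
draw of the sample `D` of size `n`, the expected generalization gap satisfies
`E_A[R(A_D) − R_n(A_D)] ≤ 2 β_n + (4 n β_n + B) √(log(1/δ)/(2n))`.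
Here `eF D z` denotes the expectation over the algorithm's randomness of the loss of
the model trained on `D` evaluated at `z`, and `eR i D z` that of the model trained on
`D` with the `i`-th point removed. -/
theorem stmt_19 (Z : Type*) [MeasurableSpace Z] (μ : Measure Z) [IsProbabilityMeasure μ]
    (n : ℕ) (hn : 0 < n) (B βn δ : ℝ) (hB : 0 < B) (hβ : 0 ≤ βn)
    (hδ0 : 0 < δ) (hδ1 : δ < 1)
    (eF : (Fin n → Z) → Z → ℝ)
    (eR : Fin n → (Fin n → Z) → Z → ℝ)
    (hmeas : Measurable (Function.uncurry eF))
    (hbd : ∀ D z, eF D z ∈ Set.Icc 0 B)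
    (hindep : ∀ i D D', (∀ j, j ≠ i → D j = D' j) → eR i D = eR i D')
    (hstab : ∀ i D z, |eF D z - eR i D z| ≤ βn) :
    (Measure.pi fun _ : Fin n => μ)
      {D | (∫ z, eF D z ∂μ) - (1 / (n : ℝ)) * ∑ i, eF D (D i)
            ≤ 2 * βn + (4 * n * βn + B) * Real.sqrt (Real.log (1 / δ) / (2 * n))}
      ≥ ENNReal.ofReal (1 - δ) := by
  obtain ⟨n', rfl⟩ : ∃ n', n = n' + 1 := ⟨n - 1, (Nat.succ_pred_eq_of_pos hn).symm⟩
  have hnR : (0:ℝ) < (n' + 1 : ℕ) := by positivity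
  have hnR' : (((n' + 1 : ℕ):ℕ):ℝ) ≠ 0 := ne_of_gt hnR
  set Pm : Measure (Fin (n' + 1 : ℕ) → Z) := Measure.pi fun _ : Fin (n' + 1 : ℕ) => μ with hPmdef
  set Pn' : Measure (Fin n' → Z) := Measure.pi fun _ : Fin n' => μ
  -- basic measurability
  have hbd' : ∀ D z, |eF D z| ≤ B := fun D z =>
    abs_le.2 ⟨by linarith [(hbd D z).1], (hbd D z).2⟩
  have hFz : ∀ D : Fin (n' + 1 : ℕ) → Z, Measurable (fun z => eF D z) :=
    fun D => hmeas.comp (measurable_prodMk_left)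
  have hFzint : ∀ D : Fin (n' + 1 : ℕ) → Z, Integrable (fun z => eF D z) μ :=
    fun D => int_of_bdd μ (hFz D).aestronglyMeasurable (fun z => hbd' D z)
  set F1 : (Fin (n' + 1 : ℕ) → Z) → ℝ := fun D => ∫ z, eF D z ∂μ with hF1def
  have hF1meas : Measurable F1 :=
    (hmeas.stronglyMeasurable.integral_prod_right').measurable
  have hF1mem : ∀ D, F1 D ∈ Set.Icc 0 B := by
    intro D
    constructor
    · exact integral_nonneg (fun z => (hbd D z).1)
    · calc ∫ z, eF D z ∂μ ≤ ∫ _ : Z, B ∂μ :=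
            integral_mono (hFzint D) (integrable_const B) (fun z => (hbd D z).2)
        _ = B := by simp
  have htermmeas : ∀ i : Fin (n' + 1 : ℕ), Measurable (fun D : Fin (n' + 1 : ℕ) → Z => eF D (D i)) :=
    fun i => hmeas.comp (measurable_id.prodMk (measurable_pi_apply i))
  set g : (Fin (n' + 1 : ℕ) → Z) → ℝ :=
    fun D => (∫ z, eF D z ∂μ) - (1 / ((n' + 1 : ℕ) : ℝ)) * ∑ i, eF D (D i) with hgdef
  have hgmeas : Measurable g :=
    hF1meas.sub ((Finset.univ.measurable_sum (fun i _ => htermmeas i)).const_mul _)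
  have hsummem : ∀ D : Fin (n' + 1 : ℕ) → Z, (1 / ((n' + 1 : ℕ) : ℝ)) * ∑ i, eF D (D i) ∈ Set.Icc 0 B := by
    intro D
    have h1 : (0:ℝ) ≤ ∑ i, eF D (D i) := Finset.sum_nonneg (fun i _ => (hbd D (D i)).1)
    have h2 : ∑ i, eF D (D i) ≤ (n' + 1 : ℕ) * B := by
      calc ∑ i, eF D (D i) ≤ ∑ _i : Fin (n' + 1 : ℕ), B :=
            Finset.sum_le_sum (fun i _ => (hbd D (D i)).2)
        _ = (n' + 1 : ℕ) * B := by
            rw [Finset.sum_const, Finset.card_univ, Fintype.card_fin, nsmul_eq_mul]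
    constructor
    · positivity
    · rw [one_div, inv_mul_le_iff₀ hnR]
      linarith
  have hgbdd : ∀ D, |g D| ≤ B := by
    intro D
    have h1 := hF1mem D
    have h2 := hsummem D
    have hgD : g D = F1 D - (1 / ((n' + 1 : ℕ) : ℝ)) * ∑ i, eF D (D i) := rfl
    rw [hgD]
    exact abs_le.2 ⟨by linarith [h1.1, h2.2], by linarith [h1.2, h2.1]⟩
  set c : ℝ := 4 * βn + B / (n' + 1 : ℕ) with hcdef
  have hcpos : 0 < c := by positivity
  -- bounded differences
  have hgdiff : ∀ (k : Fin (n' + 1 : ℕ)) (D D' : Fin (n' + 1 : ℕ) → Z),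
      (∀ j, j ≠ k → D j = D' j) → g D - g D' ≤ c := by
    intro k D D' hDD'
    have heq : eR k D = eR k D' := hindep k D D' hDD'
    have hA : F1 D - F1 D' ≤ 2 * βn := by
      rw [hF1def]
      simp only
      rw [← integral_sub (hFzint D) (hFzint D')]
      calc ∫ z, eF D z - eF D' z ∂μ ≤ ∫ _ : Z, 2 * βn ∂μ := by
            refine integral_mono ((hFzint D).sub (hFzint D')) (integrable_const _) (fun z => ?_)
            have h1 := abs_le.1 (hstab k D z)
            have h2 := abs_le.1 (hstab k D' z)
            rw [heq] at h1
            simp only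
            linarith [h1.1, h1.2, h2.1, h2.2]
        _ = 2 * βn := by simp
    have hBsum : ∑ i, (eF D' (D' i) - eF D (D i)) ≤ (n' + 1 : ℕ) * (2 * βn) + B := by
      calc ∑ i, (eF D' (D' i) - eF D (D i))
          ≤ ∑ i, (2 * βn + if i = k then B else 0) := by
            refine Finset.sum_le_sum (fun i _ => ?_)
            rcases eq_or_ne i k with rfl | hik
            · rw [if_pos rfl]
              have h1 := (hbd D' (D' i)).2
              have h2 := (hbd D (D i)).1
              linarith
            · rw [if_neg hik]
              have hDi : D i = D' i := hDD' i hik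
              have h1 := abs_le.1 (hstab k D (D i))
              have h2 := abs_le.1 (hstab k D' (D' i))
              rw [heq] at h1
              rw [← hDi] at h2 ⊢
              linarith [h1.1, h1.2, h2.1, h2.2]
        _ = (n' + 1 : ℕ) * (2 * βn) + B := by
            rw [Finset.sum_add_distrib, Finset.sum_const, Finset.sum_ite_eq' Finset.univ k]
            simp [Finset.card_univ]
    have hgsplit : g D - g D' = (F1 D - F1 D') + (1 / ((n' + 1 : ℕ) : ℝ)) * ∑ i, (eF D' (D' i) - eF D (D i)) := by
      rw [hgdef]
      simp only
      rw [Finset.sum_sub_distrib]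
      ring
    rw [hgsplit, hcdef]
    have h1n : (0:ℝ) < 1 / (n' + 1 : ℕ) := by positivity
    have : (1 / ((n' + 1 : ℕ) : ℝ)) * ∑ i, (eF D' (D' i) - eF D (D i)) ≤ (1 / ((n' + 1 : ℕ) : ℝ)) * ((n' + 1 : ℕ) * (2 * βn) + B) :=
      mul_le_mul_of_nonneg_left hBsum h1n.le
    have heval : (1 / ((n' + 1 : ℕ) : ℝ)) * ((n' + 1 : ℕ) * (2 * βn) + B) = 2 * βn + B / (n' + 1 : ℕ) := by
      field_simp
    linarith
  -- mean bound
  set m : ℝ := ∫ D, g D ∂Pm with hmdef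
  set T : Fin (n' + 1 : ℕ) → (Fin (n' + 1 : ℕ) → Z) → ℝ := fun i D => F1 D - eF D (D i) with hTdef
  have hTmeas : ∀ i, Measurable (T i) := fun i => hF1meas.sub (htermmeas i)
  have hTbdd : ∀ i D, |T i D| ≤ B := by
    intro i D
    have h1 := hF1mem D
    have h2 := hbd D (D i)
    have hTD : T i D = F1 D - eF D (D i) := rfl
    rw [hTD]
    exact abs_le.2 ⟨by linarith [h1.1, h2.2], by linarith [h1.2, h2.1]⟩
  have hTint : ∀ i, Integrable (T i) Pm :=
    fun i => int_of_bdd Pm (hTmeas i).aestronglyMeasurable (fun D => hTbdd i D)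
  have hTle : ∀ i : Fin (n' + 1 : ℕ), ∫ D, T i D ∂Pm ≤ 2 * βn := by
    intro i
    rw [integral_insZ μ i (T i) (hTmeas i) B (hTbdd i)]
    have hinsmeas : ∀ E : Fin n' → Z, Measurable (fun x : Z => insZ i x E) :=
      fun E => (measurable_insZ i).comp (measurable_id.prodMk measurable_const)
    have hinner : ∀ E : Fin n' → Z, ∫ x, T i (insZ i x E) ∂μ ≤ 2 * βn := by
      intro E
      have hu2meas : Measurable (fun z : Z => eF (insZ i z E) z) :=
        hmeas.comp ((hinsmeas E).prodMk measurable_id)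
      have hu2int : Integrable (fun z : Z => eF (insZ i z E) z) μ :=
        int_of_bdd μ hu2meas.aestronglyMeasurable (fun z => hbd' _ _)
      set C : ℝ := ∫ z, eF (insZ i z E) z ∂μ with hCdef
      have hpt : ∀ x : Z, T i (insZ i x E) ≤ C + 2 * βn - eF (insZ i x E) x := by
        intro x
        have hix : (insZ i x E) i = x := insZ_same i x E
        have hF1le : F1 (insZ i x E) ≤ C + 2 * βn := by
          rw [hF1def]
          simp only
          calc ∫ z, eF (insZ i x E) z ∂μ
              ≤ ∫ z, eF (insZ i z E) z + 2 * βn ∂μ := by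
                refine integral_mono (hFzint _) (hu2int.add (integrable_const _)) (fun z => ?_)
                have he : eR i (insZ i x E) = eR i (insZ i z E) :=
                  hindep i _ _ (insZ_diff_same i x z E)
                have h1 := abs_le.1 (hstab i (insZ i x E) z)
                have h2 := abs_le.1 (hstab i (insZ i z E) z)
                rw [he] at h1
                simp only
                linarith [h1.1, h1.2, h2.1, h2.2]
            _ = C + 2 * βn := by
                rw [integral_add hu2int (integrable_const _), integral_const]
                simp [hCdef]
        rw [hTdef]
        simp only
        rw [hix]
        linarith
      have hTinsmeas : Measurable (fun x : Z => T i (insZ i x E)) :=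
        (hTmeas i).comp (hinsmeas E)
      have hTinsint : Integrable (fun x : Z => T i (insZ i x E)) μ :=
        int_of_bdd μ hTinsmeas.aestronglyMeasurable (fun x => hTbdd i _)
      calc ∫ x, T i (insZ i x E) ∂μ
          ≤ ∫ x, C + 2 * βn - eF (insZ i x E) x ∂μ :=
            integral_mono hTinsint ((integrable_const _).sub hu2int) hpt
        _ = 2 * βn := by
            rw [integral_sub (integrable_const _) hu2int, integral_const]
            simp only [measure_univ, probReal_univ, ENNReal.toReal_one, smul_eq_mul, one_mul]
            rw [hCdef]
            ring
    have houtmeas : StronglyMeasurable (fun E : Fin n' → Z => ∫ x, T i (insZ i x E) ∂μ) := by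
      have : Measurable (fun p : Z × (Fin n' → Z) => T i (insZ i p.1 p.2)) :=
        (hTmeas i).comp (measurable_insZ i)
      exact this.stronglyMeasurable.integral_prod_left'
    have houtint : Integrable (fun E : Fin n' → Z => ∫ x, T i (insZ i x E) ∂μ) Pn' := by
      refine int_of_bdd Pn' houtmeas.aestronglyMeasurable (M := B) (fun E => ?_)
      exact abs_int_le μ _ B ((hTmeas i).comp (hinsmeas E)).aestronglyMeasurable
        (fun x => hTbdd i _)
    calc ∫ E, ∫ x, T i (insZ i x E) ∂μ ∂Pn'
        ≤ ∫ _ : Fin n' → Z, 2 * βn ∂Pn' :=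
          integral_mono houtint (integrable_const _) hinner
      _ = 2 * βn := by simp
  have hgT : ∀ D, g D = (1 / ((n' + 1 : ℕ) : ℝ)) * ∑ i, T i D := by
    intro D
    rw [hgdef, hTdef]
    simp only
    rw [Finset.sum_sub_distrib, Finset.sum_const, Finset.card_univ, Fintype.card_fin]
    push_cast
    field_simp
    ring
  have hmle : m ≤ 2 * βn := by
    have : m = (1 / ((n' + 1 : ℕ) : ℝ)) * ∑ i, ∫ D, T i D ∂Pm := by
      rw [hmdef]
      rw [integral_congr_ae (Filter.Eventually.of_forall hgT)]
      rw [integral_const_mul, integral_finset_sum _ (fun i _ => hTint i)]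
    rw [this]
    have hsum : ∑ i : Fin (n' + 1 : ℕ), ∫ D, T i D ∂Pm ≤ (n' + 1 : ℕ) * (2 * βn) := by
      calc ∑ i : Fin (n' + 1 : ℕ), ∫ D, T i D ∂Pm ≤ ∑ _i : Fin (n' + 1 : ℕ), 2 * βn :=
            Finset.sum_le_sum (fun i _ => hTle i)
        _ = (n' + 1 : ℕ) * (2 * βn) := by
            rw [Finset.sum_const, Finset.card_univ, Fintype.card_fin, nsmul_eq_mul]
    have h1n : (0:ℝ) ≤ 1 / (n' + 1 : ℕ) := by positivity
    calc (1 / ((n' + 1 : ℕ) : ℝ)) * ∑ i, ∫ D, T i D ∂Pm ≤ (1 / ((n' + 1 : ℕ) : ℝ)) * ((n' + 1 : ℕ) * (2 * βn)) :=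
          mul_le_mul_of_nonneg_left hsum h1n
      _ = 2 * βn := by field_simp
  -- Chernoff
  set L : ℝ := Real.log (1 / δ) with hLdef
  have hLpos : 0 < L := Real.log_pos (one_lt_one_div hδ0 hδ1)
  set s : ℝ := Real.sqrt (L / (2 * (n' + 1 : ℕ))) with hsdef
  have hs0 : 0 ≤ s := Real.sqrt_nonneg _
  have hs2 : s ^ 2 = L / (2 * (n' + 1 : ℕ)) := Real.sq_sqrt (by positivity)
  set ε : ℝ := (4 * (n' + 1 : ℕ) * βn + B) * s with hεdef
  have hεnc : ε = ((n' + 1 : ℕ) : ℝ) * c * s := by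
    have h : ((n' + 1 : ℕ) : ℝ) * (4 * βn + B / ((n' + 1 : ℕ) : ℝ)) = 4 * ((n' + 1 : ℕ) : ℝ) * βn + B := by
      field_simp
    rw [hεdef, hcdef, ← h]
  set t : ℝ := 4 * s / c with htdef
  have ht0 : 0 ≤ t := by positivity
  have hmgfint : Integrable (fun D => Real.exp (t * (g D - m))) Pm := by
    have hmabs : |m| ≤ B := abs_int_le Pm g B hgmeas.aestronglyMeasurable hgbdd
    refine int_of_bdd Pm (((hgmeas.sub measurable_const).const_mul t).exp.aestronglyMeasurable)
      (M := Real.exp (|t| * (2 * B))) (fun D => ?_)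
    rw [abs_of_pos (Real.exp_pos _)]
    apply Real.exp_le_exp.2
    calc t * (g D - m) ≤ |t * (g D - m)| := le_abs_self _
      _ = |t| * |g D - m| := abs_mul _ _
      _ ≤ |t| * (2 * B) := by
          apply mul_le_mul_of_nonneg_left _ (abs_nonneg t)
          calc |g D - m| ≤ |g D| + |m| := abs_sub _ _
            _ ≤ 2 * B := by linarith [hgbdd D, hmabs]
  have hmgf := mgf_bound μ c t (n' + 1 : ℕ) g B hgmeas hgbdd hgdiff
  have hchern := measure_ge_le_exp_mul_mgf (X := fun D => g D - m) (μ := Pm) ε ht0 (by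
    simpa using hmgfint)
  have hmgfeq : mgf (fun D => g D - m) Pm t = ∫ D, Real.exp (t * (g D - m)) ∂Pm := rfl
  have hmgfle : mgf (fun D => g D - m) Pm t ≤ Real.exp (t ^ 2 * (n' + 1 : ℕ) * c ^ 2 / 8) := by
    rw [hmgfeq]
    rw [← hmdef] at hmgf
    exact hmgf
  have htail : (Pm {D | ε ≤ g D - m}).toReal ≤ δ := by
    have h1 : (Pm {D | ε ≤ g D - m}).toReal
        ≤ Real.exp (-t * ε) * Real.exp (t ^ 2 * (n' + 1 : ℕ) * c ^ 2 / 8) := by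
      refine le_trans hchern ?_
      exact mul_le_mul_of_nonneg_left hmgfle (Real.exp_pos _).le
    have h2 : Real.exp (-t * ε) * Real.exp (t ^ 2 * (n' + 1 : ℕ) * c ^ 2 / 8) = δ := by
      rw [← Real.exp_add]
      have hexp : -t * ε + t ^ 2 * (n' + 1 : ℕ) * c ^ 2 / 8 = -L := by
        rw [hεnc, htdef]
        have hc' : c ≠ 0 := ne_of_gt hcpos
        have heq1 : -(4 * s / c) * (((n' + 1 : ℕ) : ℝ) * c * s) + (4 * s / c) ^ 2 * (n' + 1 : ℕ) * c ^ 2 / 8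
            = -(2 * ((n' + 1 : ℕ) : ℝ) * s ^ 2) := by
          field_simp
          ring
        rw [heq1, hs2]
        field_simp
      rw [hexp, Real.exp_neg, hLdef, Real.exp_log (by positivity)]
      rw [one_div, inv_inv]
    linarith
  -- conclusion
  have hSmeas : MeasurableSet {D | g D ≤ 2 * βn + ε} :=
    measurableSet_le hgmeas measurable_const
  have hsub : {D | g D ≤ 2 * βn + ε}ᶜ ⊆ {D | ε ≤ g D - m} := by
    intro D hD
    simp only [Set.mem_compl_iff, Set.mem_setOf_eq, not_le] at hD
    simp only [Set.mem_setOf_eq]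
    linarith
  have hcompl : Pm {D | g D ≤ 2 * βn + ε}ᶜ ≤ ENNReal.ofReal δ := by
    refine le_trans (measure_mono hsub) ?_
    rw [ENNReal.le_ofReal_iff_toReal_le (measure_ne_top Pm _) hδ0.le]
    exact htail
  have hgoal : Pm {D | g D ≤ 2 * βn + ε} ≥ ENNReal.ofReal (1 - δ) := by
    have hSeq : Pm {D | g D ≤ 2 * βn + ε} = 1 - Pm {D | g D ≤ 2 * βn + ε}ᶜ := by
      rw [measure_compl hSmeas (measure_ne_top _ _), measure_univ]
      exact (ENNReal.sub_sub_cancel ENNReal.one_ne_top prob_le_one).symm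
    rw [hSeq]
    calc ENNReal.ofReal (1 - δ) = ENNReal.ofReal 1 - ENNReal.ofReal δ :=
          ENNReal.ofReal_sub 1 hδ0.le
      _ = 1 - ENNReal.ofReal δ := by rw [ENNReal.ofReal_one]
      _ ≤ 1 - Pm {D | g D ≤ 2 * βn + ε}ᶜ := tsub_le_tsub_left hcompl 1
  exact hgoal
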